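/- Let N ≥ 1 and let p be a probability distribution on binary strings x = (x_1,…,x_N) ∈ {0,1}^N. For a prefix x_n = (x_1,…,x_n) with p(x_n) := Σ_{x_{n+1},…,x_N} p(x) > 0, let p(x_{n+1}|x_n) denote the conditional marginal p(x_{n+1} followed by prefix x_n)/p(x_n). Suppose that for each n ∈ {0,…,N−1} and each prefix x_n with p(x_n) > 0 one is given a number p'(0|x_n) ∈ [0,1] with |p'(0|x_n) − p(0|x_n)| ≤ ε, and set p'(1|x_n) := 1 − p'(0|x_n) (for prefixes of probability zero, p'(0|x_n) ∈ [0,1] is arbitrary). Define the distribution p'(x) := p'(x_1) p'(x_2|x_1) ⋯ p'(x_N|x_{N−1}). Then the total variation distance satisfies Σ_{x ∈ {0,1}^N} |p'(x) − p(x)| ≤ 2εN. In particular, if ε ≤ N^{−α} with α > 1, then Σ_x |p'(x) − p(x)| ≤ 2N^{1−α}. -/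

import Mathlib

/-- `x` and `y` agree on their first `n` coordinates. -/
def PrefixAgree {N : ℕ} (n : ℕ) (x y : Fin N → Fin 2) : Prop :=
  ∀ i : Fin N, (i : ℕ) < n → x i = y i

instance {N n : ℕ} (x y : Fin N → Fin 2) : Decidable (PrefixAgree n x y) :=
  inferInstanceAs (Decidable (∀ i : Fin N, (i : ℕ) < n → x i = y i))

/-- The marginal probability of the length-`n` prefix of `x` under `p`:
the sum of `p y` over all strings `y` agreeing with `x` on the first `n` coordinates. -/
noncomputable def prefixMarg {N : ℕ} (p : (Fin N → Fin 2) → ℝ) (n : ℕ)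
    (x : Fin N → Fin 2) : ℝ :=
  ∑ y : Fin N → Fin 2, if PrefixAgree n x y then p y else 0

/-- Overwrite coordinate `n` of `x` with the value `v`. -/
def setCoord {N : ℕ} (x : Fin N → Fin 2) (n : ℕ) (v : Fin 2) : Fin N → Fin 2 :=
  fun i => if (i : ℕ) = n then v else x i

namespace TVAux

variable {N : ℕ}

noncomputable def G (f : ℕ → (Fin N → Fin 2) → ℝ) (n : ℕ) (x : Fin N → Fin 2) : ℝ :=
  if h : n < N then (if x ⟨n, h⟩ = 0 then f n x else 1 - f n x) else 1

noncomputable def T (f : ℕ → (Fin N → Fin 2) → ℝ) (m : ℕ) (x : Fin N → Fin 2) : ℝ :=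
  ∏ i ∈ Finset.Ico m N, G f i x

def flipAt (n : ℕ) (x : Fin N → Fin 2) : Fin N → Fin 2 :=
  fun i => if (i : ℕ) = n then x i + 1 else x i

lemma fin2_cases (a : Fin 2) : a = 0 ∨ a = 1 :=
  match a with
  | 0 => Or.inl rfl
  | 1 => Or.inr rfl

lemma flipAt_invol (n : ℕ) : Function.Involutive (flipAt (N := N) n) := by
  intro x; funext i
  unfold flipAt
  by_cases h : (i : ℕ) = n
  · simp only [h, if_pos rfl]
    rcases fin2_cases (x i) with h2 | h2 <;> rw [h2] <;> decide
  · simp [h]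

lemma prefixAgree_flipAt (n : ℕ) (x : Fin N → Fin 2) : PrefixAgree n x (flipAt n x) := by
  intro i hi
  unfold flipAt
  rw [if_neg (by omega)]

lemma prefixAgree_mono {n m : ℕ} (h : n ≤ m) {x y : Fin N → Fin 2}
    (hxy : PrefixAgree m x y) : PrefixAgree n x y :=
  fun i hi => hxy i (lt_of_lt_of_le hi h)

lemma prefixMarg_congr (p : (Fin N → Fin 2) → ℝ) {n : ℕ} {x y : Fin N → Fin 2}
    (h : PrefixAgree n x y) : prefixMarg p n x = prefixMarg p n y := by
  unfold prefixMarg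
  refine Finset.sum_congr rfl fun z _ => ?_
  refine if_congr ⟨fun hz i hi => ?_, fun hz i hi => ?_⟩ rfl rfl
  · exact (h i hi).symm.trans (hz i hi)
  · exact (h i hi).trans (hz i hi)

lemma prefixMarg_nonneg (p : (Fin N → Fin 2) → ℝ) (hp : ∀ x, 0 ≤ p x) (n : ℕ)
    (x : Fin N → Fin 2) : 0 ≤ prefixMarg p n x :=
  Finset.sum_nonneg fun y _ => by
    split
    · exact hp y
    · exact le_refl 0

lemma prefixMarg_top (p : (Fin N → Fin 2) → ℝ) (x : Fin N → Fin 2) :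
    prefixMarg p N x = p x := by
  unfold prefixMarg
  have hiff : ∀ y : Fin N → Fin 2, PrefixAgree N x y ↔ y = x := by
    intro y
    constructor
    · intro h; funext i; exact (h i i.isLt).symm
    · rintro rfl; intro i _; rfl
  calc (∑ y : Fin N → Fin 2, if PrefixAgree N x y then p y else 0)
      = ∑ y : Fin N → Fin 2, if y = x then p y else 0 :=
        Finset.sum_congr rfl fun y _ => if_congr (hiff y) rfl rfl
    _ = p x := by rw [Finset.sum_ite_eq' Finset.univ x p]; simp

lemma setCoord_self {n : ℕ} (hn : n < N) (x : Fin N → Fin 2) :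
    setCoord x n (x ⟨n, hn⟩) = x := by
  funext i
  unfold setCoord
  by_cases h : (i : ℕ) = n
  · rw [if_pos h]; congr 1; exact Fin.ext h.symm
  · rw [if_neg h]

lemma setCoord_flip {n : ℕ} (hn : n < N) (x : Fin N → Fin 2) :
    setCoord x n (x ⟨n, hn⟩ + 1) = flipAt n x := by
  funext i
  unfold setCoord flipAt
  by_cases h : (i : ℕ) = n
  · rw [if_pos h, if_pos h]; congr 2; exact Fin.ext h.symm
  · rw [if_neg h, if_neg h]

lemma prefixAgree_setCoord_iff {n : ℕ} (hn : n < N) (x y : Fin N → Fin 2) (v : Fin 2) :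
    PrefixAgree (n + 1) (setCoord x n v) y ↔ PrefixAgree n x y ∧ y ⟨n, hn⟩ = v := by
  constructor
  · intro h
    constructor
    · intro i hi
      have := h i (by omega)
      rwa [setCoord, if_neg (by omega)] at this
    · have := h ⟨n, hn⟩ (by simp)
      rw [setCoord, if_pos rfl] at this
      exact this.symm
  · rintro ⟨h1, h2⟩ i hi
    unfold setCoord
    by_cases h : (i : ℕ) = n
    · rw [if_pos h]
      have : i = ⟨n, hn⟩ := Fin.ext h
      rw [this, h2]
    · rw [if_neg h]
      exact h1 i (by omega)

lemma prefixMarg_split (p : (Fin N → Fin 2) → ℝ) {n : ℕ} (hn : n < N) (x : Fin N → Fin 2) :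
    prefixMarg p n x =
      prefixMarg p (n + 1) (setCoord x n 0) + prefixMarg p (n + 1) (setCoord x n 1) := by
  unfold prefixMarg
  rw [← Finset.sum_add_distrib]
  refine Finset.sum_congr rfl fun y _ => ?_
  rw [if_congr (prefixAgree_setCoord_iff hn x y 0) rfl rfl,
      if_congr (prefixAgree_setCoord_iff hn x y 1) rfl rfl]
  by_cases h : PrefixAgree n x y
  · rcases fin2_cases (y ⟨n, hn⟩) with h2 | h2 <;>
      simp [h, h2]
  · simp [h]

lemma G_congr (f : ℕ → (Fin N → Fin 2) → ℝ)
    (hf_prefix : ∀ n x y, PrefixAgree n x y → f n x = f n y)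
    {n : ℕ} {x y : Fin N → Fin 2} (hxy : PrefixAgree (n + 1) x y) :
    G f n x = G f n y := by
  unfold G
  split
  · next hn =>
    rw [hf_prefix n x y (prefixAgree_mono (Nat.le_succ n) hxy),
      hxy ⟨n, hn⟩ (by simp)]
  · rfl

lemma G_flip (f : ℕ → (Fin N → Fin 2) → ℝ)
    (hf_prefix : ∀ n x y, PrefixAgree n x y → f n x = f n y)
    {n : ℕ} (hn : n < N) (x : Fin N → Fin 2) :
    G f n (flipAt n x) = 1 - G f n x := by
  have hf : f n (flipAt n x) = f n x := (hf_prefix n x (flipAt n x) (prefixAgree_flipAt n x)).symm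
  have hcoord : flipAt n x ⟨n, hn⟩ = x ⟨n, hn⟩ + 1 := by
    unfold flipAt; rw [if_pos rfl]
  unfold G
  rw [dif_pos hn, dif_pos hn, hcoord, hf]
  rcases fin2_cases (x ⟨n, hn⟩) with h2 | h2
  · rw [h2, show ((0 : Fin 2) + 1 = 1) from rfl, if_neg (by decide), if_pos rfl]
    try ring
  · rw [h2, show ((1 : Fin 2) + 1 = 0) from rfl, if_pos rfl, if_neg (by decide)]
    try ring

lemma sum_mul_G (f : ℕ → (Fin N → Fin 2) → ℝ)
    (hf_prefix : ∀ n x y, PrefixAgree n x y → f n x = f n y)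
    {n : ℕ} (hn : n < N)
    (h : (Fin N → Fin 2) → ℝ) (hh : ∀ x y, PrefixAgree n x y → h x = h y) :
    2 * ∑ x, h x * G f n x = ∑ x, h x := by
  have key : ∑ x, h x * G f n x = ∑ x, h x * (1 - G f n x) := by
    refine Fintype.sum_equiv ((flipAt_invol (N := N) n).toPerm) _ _ fun x => ?_
    have h1 : h (flipAt n x) = h x := (hh x (flipAt n x) (prefixAgree_flipAt n x)).symm
    simp only [Function.Involutive.coe_toPerm]
    rw [G_flip f hf_prefix hn x, h1]
    try ring
  have : (∑ x, h x * G f n x) + (∑ x, h x * (1 - G f n x)) = ∑ x, h x := by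
    rw [← Finset.sum_add_distrib]
    exact Finset.sum_congr rfl fun x _ => by ring
  rw [key] at this ⊢
  linarith [this]

lemma tailA (f : ℕ → (Fin N → Fin 2) → ℝ)
    (hf_prefix : ∀ n x y, PrefixAgree n x y → f n x = f n y) :
    ∀ (d m : ℕ), m + d = N →
    ∀ h : (Fin N → Fin 2) → ℝ, (∀ x y, PrefixAgree m x y → h x = h y) →
    2 ^ d * ∑ x, h x * T f m x = ∑ x, h x := by
  intro d
  induction d with
  | zero =>
    intro m hm h hh
    have : m = N := by omega
    subst this
    simp [T]
  | succ d ih =>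
    intro m hm h hh
    have hmN : m < N := by omega
    have hT : ∀ x, T f m x = G f m x * T f (m + 1) x := fun x => by
      unfold T
      exact Finset.prod_eq_prod_Ico_succ_bot hmN _
    have hh' : ∀ x y, PrefixAgree (m + 1) x y → h x * G f m x = h y * G f m y := by
      intro x y hxy
      rw [hh x y (prefixAgree_mono (Nat.le_succ m) hxy), G_congr f hf_prefix hxy]
    have hih := ih (m + 1) (by omega) (fun x => h x * G f m x) hh'
    have hrw : ∑ x, h x * T f m x = ∑ x, (h x * G f m x) * T f (m + 1) x :=
      Finset.sum_congr rfl fun x _ => by rw [hT x]; ring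
    calc 2 ^ (d + 1) * ∑ x, h x * T f m x
        = 2 * (2 ^ d * ∑ x, (h x * G f m x) * T f (m + 1) x) := by rw [hrw]; ring
      _ = 2 * ∑ x, h x * G f m x := by rw [hih]
      _ = ∑ x, h x := sum_mul_G f hf_prefix hmN h hh

lemma sum_prefixMarg (p : (Fin N → Fin 2) → ℝ) (hp_sum : ∑ x, p x = 1) :
    ∀ (d m : ℕ), m + d = N → ∑ x, prefixMarg p m x = 2 ^ d := by
  intro d
  induction d with
  | zero =>
    intro m hm
    have : m = N := by omega
    subst this
    simp [prefixMarg_top, hp_sum]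
  | succ d ih =>
    intro m hm
    have hmN : m < N := by omega
    have key : ∀ x : Fin N → Fin 2,
        prefixMarg p m x = prefixMarg p (m + 1) x + prefixMarg p (m + 1) (flipAt m x) := by
      intro x
      rw [prefixMarg_split p hmN x]
      rcases fin2_cases (x ⟨m, hmN⟩) with h2 | h2
      · have e0 : setCoord x m 0 = x := by rw [← h2]; exact setCoord_self hmN x
        have e1 : setCoord x m 1 = flipAt m x := by
          have := setCoord_flip hmN x; rw [h2] at this
          simpa using this
        rw [e0, e1]
      · have e1 : setCoord x m 1 = x := by rw [← h2]; exact setCoord_self hmN x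
        have e0 : setCoord x m 0 = flipAt m x := by
          have := setCoord_flip hmN x; rw [h2] at this
          have h01 : (1 : Fin 2) + 1 = 0 := by decide
          rw [h01] at this
          exact this
        rw [e0, e1]; ring
    have hflip : ∑ x, prefixMarg p (m + 1) (flipAt m x) = ∑ x, prefixMarg p (m + 1) x :=
      Fintype.sum_equiv ((flipAt_invol (N := N) m).toPerm) _ _ fun x => by
        simp only [Function.Involutive.coe_toPerm]
    calc ∑ x, prefixMarg p m x
        = ∑ x, (prefixMarg p (m + 1) x + prefixMarg p (m + 1) (flipAt m x)) :=
          Finset.sum_congr rfl fun x _ => key x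
      _ = (∑ x, prefixMarg p (m + 1) x) + ∑ x, prefixMarg p (m + 1) (flipAt m x) :=
          Finset.sum_add_distrib
      _ = 2 * ∑ x, prefixMarg p (m + 1) x := by rw [hflip]; ring
      _ = 2 ^ (d + 1) := by rw [ih (m + 1) (by omega)]; ring



lemma step (p : (Fin N → Fin 2) → ℝ) (hp_nonneg : ∀ x, 0 ≤ p x)
    (hp_sum : ∑ x, p x = 1) (ε : ℝ)
    (f : ℕ → (Fin N → Fin 2) → ℝ)
    (hf01 : ∀ n x, 0 ≤ f n x ∧ f n x ≤ 1)
    (hf_prefix : ∀ n x y, PrefixAgree n x y → f n x = f n y)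
    (hf_approx : ∀ n, n < N → ∀ x, 0 < prefixMarg p n x →
      |f n x - prefixMarg p (n + 1) (setCoord x n 0) / prefixMarg p n x| ≤ ε)
    {n : ℕ} (hn : n < N) :
    ∑ x, |prefixMarg p n x * T f n x - prefixMarg p (n + 1) x * T f (n + 1) x| ≤ 2 * ε := by
  have hdm : (n + 1) + (N - (n + 1)) = N := by omega
  set d := N - (n + 1) with hd
  have hG01 : ∀ m x, 0 ≤ G f m x ∧ G f m x ≤ 1 := by
    intro m x
    unfold G
    split
    · split
      · exact hf01 m x
      · constructor
        · linarith [(hf01 m x).2]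
        · linarith [(hf01 m x).1]
    · exact ⟨zero_le_one, le_refl 1⟩
  have hT01 : ∀ m x, 0 ≤ T f m x ∧ T f m x ≤ 1 := by
    intro m x
    exact ⟨Finset.prod_nonneg fun i _ => (hG01 i x).1,
      Finset.prod_le_one (fun i _ => (hG01 i x).1) (fun i _ => (hG01 i x).2)⟩
  set R : (Fin N → Fin 2) → ℝ :=
    fun x => |prefixMarg p n x * G f n x - prefixMarg p (n + 1) x| with hRdef
  have hpoint : ∀ x, |prefixMarg p n x * T f n x - prefixMarg p (n + 1) x * T f (n + 1) x|
      = R x * T f (n + 1) x := by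
    intro x
    have hT : T f n x = G f n x * T f (n + 1) x := Finset.prod_eq_prod_Ico_succ_bot hn _
    rw [hT]
    have e : prefixMarg p n x * (G f n x * T f (n + 1) x)
        - prefixMarg p (n + 1) x * T f (n + 1) x
        = (prefixMarg p n x * G f n x - prefixMarg p (n + 1) x) * T f (n + 1) x := by ring
    rw [e, abs_mul, abs_of_nonneg (hT01 (n + 1) x).1]
  have hkey : ∀ x, R x ≤ ε * prefixMarg p n x := by
    intro x
    have hsplit := prefixMarg_split p hn x
    have hm0 : 0 ≤ prefixMarg p (n + 1) (setCoord x n 0) := prefixMarg_nonneg p hp_nonneg _ _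
    have hm1 : 0 ≤ prefixMarg p (n + 1) (setCoord x n 1) := prefixMarg_nonneg p hp_nonneg _ _
    have hmn : 0 ≤ prefixMarg p n x := prefixMarg_nonneg p hp_nonneg _ _
    have hcore : |prefixMarg p n x * f n x - prefixMarg p (n + 1) (setCoord x n 0)|
        ≤ ε * prefixMarg p n x := by
      rcases eq_or_lt_of_le hmn with hz | hpos
      · have h0 : prefixMarg p (n + 1) (setCoord x n 0) = 0 := by nlinarith [hsplit]
        rw [← hz, h0]
        simp
      · have happ := hf_approx n hn x hpos
        have hne : prefixMarg p n x ≠ 0 := ne_of_gt hpos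
        have e : prefixMarg p n x * f n x - prefixMarg p (n + 1) (setCoord x n 0)
            = prefixMarg p n x *
              (f n x - prefixMarg p (n + 1) (setCoord x n 0) / prefixMarg p n x) := by
          field_simp
        rw [e, abs_mul, abs_of_pos hpos]
        calc prefixMarg p n x *
              |f n x - prefixMarg p (n + 1) (setCoord x n 0) / prefixMarg p n x|
            ≤ prefixMarg p n x * ε := mul_le_mul_of_nonneg_left happ (le_of_lt hpos)
          _ = ε * prefixMarg p n x := mul_comm _ _
    rcases fin2_cases (x ⟨n, hn⟩) with h2 | h2
    · have ex : setCoord x n 0 = x := by rw [← h2]; exact setCoord_self hn x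
      have hG : G f n x = f n x := by unfold G; rw [dif_pos hn, if_pos h2]
      rw [ex] at hcore
      show |prefixMarg p n x * G f n x - prefixMarg p (n + 1) x| ≤ ε * prefixMarg p n x
      rw [hG]
      exact hcore
    · have ex : setCoord x n 1 = x := by rw [← h2]; exact setCoord_self hn x
      have hG : G f n x = 1 - f n x := by
        unfold G; rw [dif_pos hn, if_neg (by rw [h2]; decide)]
      rw [ex] at hsplit
      show |prefixMarg p n x * G f n x - prefixMarg p (n + 1) x| ≤ ε * prefixMarg p n x
      have heq : prefixMarg p n x * G f n x - prefixMarg p (n + 1) x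
          = -(prefixMarg p n x * f n x - prefixMarg p (n + 1) (setCoord x n 0)) := by
        rw [hG]; linear_combination hsplit
      rw [heq, abs_neg]
      exact hcore
  have hRprefix : ∀ x y, PrefixAgree (n + 1) x y → R x = R y := by
    intro x y hxy
    show |prefixMarg p n x * G f n x - prefixMarg p (n + 1) x|
        = |prefixMarg p n y * G f n y - prefixMarg p (n + 1) y|
    rw [prefixMarg_congr p (prefixAgree_mono (Nat.le_succ n) hxy),
      prefixMarg_congr p hxy, G_congr f hf_prefix hxy]
  have htail := tailA f hf_prefix d (n + 1) hdm R hRprefix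
  have hsumR : ∑ x, R x ≤ ε * 2 ^ (d + 1) := by
    have hms := sum_prefixMarg p hp_sum (d + 1) n (by omega)
    calc ∑ x, R x ≤ ∑ x, ε * prefixMarg p n x := Finset.sum_le_sum fun x _ => hkey x
      _ = ε * ∑ x, prefixMarg p n x := by rw [Finset.mul_sum]
      _ = ε * 2 ^ (d + 1) := by rw [hms]
  have hpow : (0 : ℝ) < 2 ^ d := by positivity
  calc ∑ x, |prefixMarg p n x * T f n x - prefixMarg p (n + 1) x * T f (n + 1) x|
      = ∑ x, R x * T f (n + 1) x := Finset.sum_congr rfl fun x _ => hpoint x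
    _ ≤ 2 * ε := by
        have hle : 2 ^ d * ∑ x, R x * T f (n + 1) x ≤ 2 ^ d * (2 * ε) := by
          rw [htail]
          calc ∑ x, R x ≤ ε * 2 ^ (d + 1) := hsumR
            _ = 2 ^ d * (2 * ε) := by ring
        exact le_of_mul_le_mul_left hle hpow

end TVAux

/-- **Lemma 1 (total variation bound from approximate conditional marginals).**
Let `p` be a probability distribution on `{0,1}^N` (`N ≥ 1`).  Suppose `f n x`
(representing `p'(0 | x_1 ⋯ x_n)`) lies in `[0,1]`, depends only on the first `n`
coordinates of `x`, and whenever the prefix marginal `p(x_1 ⋯ x_n)` is positive it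
satisfies `|f n x − p(0 | x_1 ⋯ x_n)| ≤ ε`.  Define
`p'(x) = Π_{n<N} (f n x if x_{n+1} = 0 else 1 − f n x)`.
Then `Σ_x |p'(x) − p(x)| ≤ 2εN`; in particular if `ε ≤ N^{−α}` with `α > 1` then
`Σ_x |p'(x) − p(x)| ≤ 2 N^{1−α}`. -/
theorem tv_bound_from_approximate_marginals (N : ℕ) (hN : 1 ≤ N)
    (p : (Fin N → Fin 2) → ℝ)
    (hp_nonneg : ∀ x, 0 ≤ p x) (hp_sum : ∑ x, p x = 1)
    (ε : ℝ)
    (f : ℕ → (Fin N → Fin 2) → ℝ)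
    (hf01 : ∀ n x, 0 ≤ f n x ∧ f n x ≤ 1)
    (hf_prefix : ∀ n x y, PrefixAgree n x y → f n x = f n y)
    (hf_approx : ∀ n, n < N → ∀ x, 0 < prefixMarg p n x →
      |f n x - prefixMarg p (n + 1) (setCoord x n 0) / prefixMarg p n x| ≤ ε) :
    (∑ x, |(∏ i : Fin N, if x i = 0 then f i x else 1 - f i x) - p x| ≤ 2 * ε * N) ∧
    (∀ α : ℝ, 1 < α → ε ≤ (N : ℝ) ^ (-α) →
      ∑ x, |(∏ i : Fin N, if x i = 0 then f i x else 1 - f i x) - p x| ≤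
        2 * (N : ℝ) ^ (1 - α)) := by
  classical
  have hprod : ∀ x : Fin N → Fin 2,
      (∏ i : Fin N, if x i = 0 then f i x else 1 - f i x) = TVAux.T f 0 x := by
    intro x
    unfold TVAux.T
    rw [show Finset.Ico 0 N = Finset.range N from by ext i; simp]
    rw [← Fin.prod_univ_eq_prod_range (fun i => TVAux.G f i x) N]
    refine Finset.prod_congr rfl fun i _ => ?_
    unfold TVAux.G
    rw [dif_pos i.isLt]
  have hpm0 : ∀ x, prefixMarg p 0 x = 1 := by
    intro x
    unfold prefixMarg
    have hall : ∀ y : Fin N → Fin 2, PrefixAgree 0 x y :=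
      fun y i hi => absurd hi (Nat.not_lt_zero _)
    calc (∑ y : Fin N → Fin 2, if PrefixAgree 0 x y then p y else 0)
        = ∑ y, p y := Finset.sum_congr rfl fun y _ => if_pos (hall y)
      _ = 1 := hp_sum
  set Q : ℕ → (Fin N → Fin 2) → ℝ := fun n x => prefixMarg p n x * TVAux.T f n x with hQ
  have hQ0 : ∀ x, Q 0 x = (∏ i : Fin N, if x i = 0 then f i x else 1 - f i x) := by
    intro x
    show prefixMarg p 0 x * TVAux.T f 0 x = _
    rw [hprod x, hpm0 x, one_mul]
  have hQN : ∀ x, Q N x = p x := by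
    intro x
    show prefixMarg p N x * TVAux.T f N x = p x
    unfold TVAux.T
    rw [TVAux.prefixMarg_top p x]
    simp
  have main : ∑ x, |(∏ i : Fin N, if x i = 0 then f i x else 1 - f i x) - p x|
      ≤ 2 * ε * N := by
    calc ∑ x, |(∏ i : Fin N, if x i = 0 then f i x else 1 - f i x) - p x|
        = ∑ x, |Q 0 x - Q N x| :=
          Finset.sum_congr rfl fun x _ => by rw [hQ0 x, hQN x]
      _ ≤ ∑ x, ∑ n ∈ Finset.range N, |Q n x - Q (n + 1) x| := by
          refine Finset.sum_le_sum fun x _ => ?_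
          have ht : ∑ n ∈ Finset.range N, (Q n x - Q (n + 1) x) = Q 0 x - Q N x :=
            Finset.sum_range_sub' (fun n => Q n x) N
          rw [← ht]
          exact Finset.abs_sum_le_sum_abs _ _
      _ = ∑ n ∈ Finset.range N, ∑ x, |Q n x - Q (n + 1) x| := Finset.sum_comm
      _ ≤ ∑ _n ∈ Finset.range N, 2 * ε := by
          refine Finset.sum_le_sum fun n hn => ?_
          exact TVAux.step p hp_nonneg hp_sum ε f hf01 hf_prefix hf_approx
            (Finset.mem_range.mp hn)
      _ = N * (2 * ε) := by rw [Finset.sum_const, Finset.card_range, nsmul_eq_mul]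
      _ = 2 * ε * N := by ring
  refine ⟨main, fun α hα hε => ?_⟩
  have hN1 : (1 : ℝ) ≤ N := by exact_mod_cast hN
  have hNpos : (0 : ℝ) < N := by linarith
  have hr : (N : ℝ) ^ (1 - α) = (N : ℝ) ^ (-α) * N := by
    rw [show (1 - α) = -α + 1 by ring, Real.rpow_add hNpos, Real.rpow_one]
  have hfin : 2 * ε * N ≤ 2 * (N : ℝ) ^ (1 - α) := by
    rw [hr]
    nlinarith [hε, hNpos]
  linarith [main]
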